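/- Precise convergence to injections agrees on tags: if M' ⊑ M, both closed and well-typed, M' converges to an injection inj_i W' and M converges to inj_k W, then i = k and W' ⊑ W. -/

import Mathlib

set_option linter.unusedVariables false

/-! ## Target language -/

inductive Tag | plus | plus1 | plus2
deriving DecidableEq

inductive TTy
| unit
| arr (T₁ T₂ : TTy)
| sum (φ : Tag) (T₁ T₂ : TTy)
deriving DecidableEq

inductive Tm
| var (n : Nat)
| unit
| lam (T : TTy) (b : Tm)
| app (f a : Tm)
| inj (i : Bool) (m : Tm)          -- inj true = inj₁, inj false = inj₂
| case2 (m b₁ b₂ : Tm)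
| case1 (i : Bool) (m b : Tm)
| cast (φ₁ φ₂ : Tag) (m : Tm)
| matchfail
deriving DecidableEq

namespace Tm

def shift (d c : Nat) : Tm → Tm
| var n => var (if n < c then n else n + d)
| unit => unit
| lam T b => lam T (shift d (c+1) b)
| app f a => app (shift d c f) (shift d c a)
| inj i m => inj i (shift d c m)
| case2 m b₁ b₂ => case2 (shift d c m) (shift d (c+1) b₁) (shift d (c+1) b₂)
| case1 i m b => case1 i (shift d c m) (shift d (c+1) b)
| cast φ₁ φ₂ m => cast φ₁ φ₂ (shift d c m)
| matchfail => matchfail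

def subst : Tm → Nat → Tm → Tm
| var n, k, s => if n = k then s else if k < n then var (n-1) else var n
| unit, _, _ => unit
| lam T b, k, s => lam T (subst b (k+1) (shift 1 0 s))
| app f a, k, s => app (subst f k s) (subst a k s)
| inj i m, k, s => inj i (subst m k s)
| case2 m b₁ b₂, k, s =>
    case2 (subst m k s) (subst b₁ (k+1) (shift 1 0 s)) (subst b₂ (k+1) (shift 1 0 s))
| case1 i m b, k, s => case1 i (subst m k s) (subst b (k+1) (shift 1 0 s))
| cast φ₁ φ₂ m, k, s => cast φ₁ φ₂ (subst m k s)
| matchfail, _, _ => matchfail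

def subst0 (b s : Tm) : Tm := subst b 0 s

/-- no cast subterm -/
def castFree : Tm → Prop
| var _ => True
| unit => True
| lam _ b => castFree b
| app f a => castFree f ∧ castFree a
| inj _ m => castFree m
| case2 m b₁ b₂ => castFree m ∧ castFree b₁ ∧ castFree b₂
| case1 _ m b => castFree m ∧ castFree b
| cast _ _ _ => False
| matchfail => True

/-- no matchfail subterm -/
def mfFree : Tm → Prop
| var _ => True
| unit => True
| lam _ b => mfFree b
| app f a => mfFree f ∧ mfFree a
| inj _ m => mfFree m
| case2 m b₁ b₂ => mfFree m ∧ mfFree b₁ ∧ mfFree b₂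
| case1 _ m b => mfFree m ∧ mfFree b
| cast _ _ m => mfFree m
| matchfail => False

end Tm

inductive Value : Tm → Prop
| unit : Value .unit
| lam : ∀ T b, Value (.lam T b)
| inj : ∀ i m, Value m → Value (.inj i m)

/-- the injection tag `i` is compatible with sum constructor `φ` -/
def tagOk (i : Bool) (φ : Tag) : Prop :=
  φ = Tag.plus ∨ φ = (if i then Tag.plus1 else Tag.plus2)

instance (i : Bool) (φ : Tag) : Decidable (tagOk i φ) := by
  unfold tagOk; infer_instance

/-! ### Target typing -/

inductive Typed : List TTy → Tm → TTy → Prop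
| var : ∀ {Γ n T}, Γ[n]? = some T → Typed Γ (.var n) T
| unit : ∀ {Γ}, Typed Γ .unit .unit
| lam : ∀ {Γ T₁ T₂ b}, Typed (T₁ :: Γ) b T₂ → Typed Γ (.lam T₁ b) (.arr T₁ T₂)
| app : ∀ {Γ f a T₁ T₂}, Typed Γ f (.arr T₁ T₂) → Typed Γ a T₁ → Typed Γ (.app f a) T₂
| inj : ∀ {Γ i m T₁ T₂ φ}, Typed Γ m (if i then T₁ else T₂) → tagOk i φ →
    Typed Γ (.inj i m) (.sum φ T₁ T₂)
| case2 : ∀ {Γ m b₁ b₂ φ T₁ T₂ T}, Typed Γ m (.sum φ T₁ T₂) →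
    Typed (T₁ :: Γ) b₁ T → Typed (T₂ :: Γ) b₂ T → Typed Γ (.case2 m b₁ b₂) T
| case1 : ∀ {Γ i m b T₁ T₂ T}, Typed Γ m (.sum (if i then Tag.plus1 else Tag.plus2) T₁ T₂) →
    Typed ((if i then T₁ else T₂) :: Γ) b T → Typed Γ (.case1 i m b) T
| cast : ∀ {Γ φ₁ φ₂ m T₁ T₂}, Typed Γ m (.sum φ₁ T₁ T₂) →
    Typed Γ (.cast φ₁ φ₂ m) (.sum φ₂ T₁ T₂)
| matchfail : ∀ {Γ T}, Typed Γ .matchfail T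

/-! ### Target operational semantics (call-by-value) -/

inductive Step : Tm → Tm → Prop
| beta : ∀ {T b v}, Value v → Step (.app (.lam T b) v) (b.subst0 v)
| app1 : ∀ {m m' n}, Step m m' → Step (.app m n) (.app m' n)
| app2 : ∀ {v n n'}, Value v → Step n n' → Step (.app v n) (.app v n')
| injC : ∀ {i m m'}, Step m m' → Step (.inj i m) (.inj i m')
| case2C : ∀ {m m' b₁ b₂}, Step m m' → Step (.case2 m b₁ b₂) (.case2 m' b₁ b₂)
| case1C : ∀ {i m m' b}, Step m m' → Step (.case1 i m b) (.case1 i m' b)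
| castC : ∀ {φ₁ φ₂ m m'}, Step m m' → Step (.cast φ₁ φ₂ m) (.cast φ₁ φ₂ m')
| case2R : ∀ {i v b₁ b₂}, Value v →
    Step (.case2 (.inj i v) b₁ b₂) ((if i then b₁ else b₂).subst0 v)
| case1R : ∀ {i v b}, Value v → Step (.case1 i (.inj i v) b) (b.subst0 v)
| castOk : ∀ {φ₁ φ₂ i v}, Value v → tagOk i φ₂ →
    Step (.cast φ₁ φ₂ (.inj i v)) (.inj i v)
| castFail : ∀ {φ₁ φ₂ i v}, Value v → ¬ tagOk i φ₂ →
    Step (.cast φ₁ φ₂ (.inj i v)) .matchfail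
| mfApp1 : ∀ {n}, Step (.app .matchfail n) .matchfail
| mfApp2 : ∀ {v}, Value v → Step (.app v .matchfail) .matchfail
| mfInj : ∀ {i}, Step (.inj i .matchfail) .matchfail
| mfCase2 : ∀ {b₁ b₂}, Step (.case2 .matchfail b₁ b₂) .matchfail
| mfCase1 : ∀ {i b}, Step (.case1 i .matchfail b) .matchfail
| mfCast : ∀ {φ₁ φ₂}, Step (.cast φ₁ φ₂ .matchfail) .matchfail

/-- multi-step evaluation -/
def Steps : Tm → Tm → Prop := Relation.ReflTransGen Step

def Converges (M : Tm) : Prop := ∃ W, Steps M W ∧ Value W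

/-! ### Cast classification and target precision -/

def SafeCast (φ₁ φ₂ : Tag) : Prop := φ₂ = Tag.plus
def BackCast (φ₁ φ₂ : Tag) : Prop :=
  φ₁ = Tag.plus ∧ (φ₂ = Tag.plus1 ∨ φ₂ = Tag.plus2)
def MatchCast (φ₁ φ₂ : Tag) : Prop :=
  (φ₁ = Tag.plus1 ∧ φ₂ = Tag.plus2) ∨ (φ₁ = Tag.plus2 ∧ φ₂ = Tag.plus1)

/-- precision between casts: `⟨φ₁' ⇒ φ₂'⟩ ⊑ ⟨φ₁ ⇒ φ₂⟩` -/
inductive CastPrec : Tag → Tag → Tag → Tag → Prop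
| refl : ∀ {φ₁ φ₂}, CastPrec φ₁ φ₂ φ₁ φ₂
| mcBc : ∀ {a b c d}, MatchCast a b → BackCast c d → CastPrec a b c d
| bcSc : ∀ {a b c d}, BackCast a b → SafeCast c d → CastPrec a b c d
| mcSc : ∀ {a b c d}, MatchCast a b → SafeCast c d → CastPrec a b c d
| scSc : ∀ {φ}, CastPrec Tag.plus Tag.plus φ Tag.plus

/-- target term precision `M' ⊑ M` -/
inductive TPrec : Tm → Tm → Prop
| var : ∀ {n}, TPrec (.var n) (.var n)
| unit : TPrec .unit .unit
| lam : ∀ {T' T b' b}, TPrec b' b → TPrec (.lam T' b') (.lam T b)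
| app : ∀ {f' f a' a}, TPrec f' f → TPrec a' a → TPrec (.app f' a') (.app f a)
| inj : ∀ {i m' m}, TPrec m' m → TPrec (.inj i m') (.inj i m)
| case2 : ∀ {m' m b₁' b₁ b₂' b₂}, TPrec m' m → TPrec b₁' b₁ → TPrec b₂' b₂ →
    TPrec (.case2 m' b₁' b₂') (.case2 m b₁ b₂)
| case1 : ∀ {i m' m b' b}, TPrec m' m → TPrec b' b →
    TPrec (.case1 i m' b') (.case1 i m b)
| case1case2 : ∀ {i m' m b' b₁ b₂}, TPrec m' m → TPrec b' (if i then b₁ else b₂) →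
    TPrec (.case1 i m' b') (.case2 m b₁ b₂)
| matchfail : ∀ {m}, TPrec .matchfail m
| cast : ∀ {φ₁' φ₂' φ₁ φ₂ m' m}, CastPrec φ₁' φ₂' φ₁ φ₂ → TPrec m' m →
    TPrec (.cast φ₁' φ₂' m') (.cast φ₁ φ₂ m)
| castL : ∀ {φ₁ φ₂ m' m}, TPrec m' m → TPrec (.cast φ₁ φ₂ m') m

/-! ## Source language -/

inductive SCons | plus | plus1 | plus2 | plusQ | plusQ1 | plusQ2
deriving DecidableEq

inductive STy
| unit
| arr (A B : STy)
| sum (s : SCons) (A B : STy)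
deriving DecidableEq

/-- translation of sum constructors -/
def SCons.trans : SCons → Tag
| .plus => .plus | .plusQ => .plus
| .plus1 => .plus1 | .plusQ1 => .plus1
| .plus2 => .plus2 | .plusQ2 => .plus2

/-- type translation ⟦·⟧ -/
def STy.trans : STy → TTy
| .unit => .unit
| .arr A B => .arr A.trans B.trans
| .sum s A B => .sum s.trans A.trans B.trans

inductive SExp
| var (n : Nat)
| unit
| lam (A : STy) (b : SExp)
| app (f a : SExp)
| inj (i : Bool) (e : SExp)
| case2 (e b₁ b₂ : SExp)
| case1 (i : Bool) (e b : SExp)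
| anno (e : SExp) (A : STy)
deriving DecidableEq

/-! ### Source precision (more static = more precise) -/

inductive SConsPrec : SCons → SCons → Prop
| refl : ∀ {s}, SConsPrec s s
| pQ : SConsPrec .plus .plusQ
| p1Q1 : SConsPrec .plus1 .plusQ1
| p2Q2 : SConsPrec .plus2 .plusQ2
| p1Q : SConsPrec .plus1 .plusQ
| p2Q : SConsPrec .plus2 .plusQ
| q1Q : SConsPrec .plusQ1 .plusQ
| q2Q : SConsPrec .plusQ2 .plusQ

inductive SPrec : STy → STy → Prop
| unit : SPrec .unit .unit
| arr : ∀ {A' A B' B}, SPrec A' A → SPrec B' B → SPrec (.arr A' B') (.arr A B)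
| sum : ∀ {s' s A' A B' B}, SConsPrec s' s → SPrec A' A → SPrec B' B →
    SPrec (.sum s' A' B') (.sum s A B)

inductive EPrec : SExp → SExp → Prop
| var : ∀ {n}, EPrec (.var n) (.var n)
| unit : EPrec .unit .unit
| lam : ∀ {A' A b' b}, SPrec A' A → EPrec b' b → EPrec (.lam A' b') (.lam A b)
| app : ∀ {f' f a' a}, EPrec f' f → EPrec a' a → EPrec (.app f' a') (.app f a)
| inj : ∀ {i e' e}, EPrec e' e → EPrec (.inj i e') (.inj i e)
| case2 : ∀ {e' e b₁' b₁ b₂' b₂}, EPrec e' e → EPrec b₁' b₁ → EPrec b₂' b₂ →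
    EPrec (.case2 e' b₁' b₂') (.case2 e b₁ b₂)
| case1 : ∀ {i e' e b' b}, EPrec e' e → EPrec b' b → EPrec (.case1 i e' b') (.case1 i e b)
| anno : ∀ {e' e A' A}, EPrec e' e → SPrec A' A → EPrec (.anno e' A') (.anno e A)

def CtxPrec (Γ' Γ : List STy) : Prop := List.Forall₂ SPrec Γ' Γ

/-! ### Directed consistency -/

inductive SConsDir : SCons → SCons → Prop
| refl : ∀ {s}, SConsDir s s
| toQ : ∀ {s}, SConsDir s .plusQ
| fromQ : ∀ {s}, SConsDir .plusQ s
| oneLs : SConsDir .plus1 .plus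
| oneRs : SConsDir .plus2 .plus
| oneLq : SConsDir .plusQ1 .plus
| oneRq : SConsDir .plusQ2 .plus
| q1p1 : SConsDir .plusQ1 .plus1
| p1q1 : SConsDir .plus1 .plusQ1
| q2p2 : SConsDir .plusQ2 .plus2
| p2q2 : SConsDir .plus2 .plusQ2

inductive DCons : STy → STy → Prop
| unit : DCons .unit .unit
| arr : ∀ {A₁ A₁' A₂ A₂'}, DCons A₁ A₁' → DCons A₂' A₂ →
    DCons (.arr A₁' A₂') (.arr A₁ A₂)
| sum : ∀ {s' s A₁' A₁ A₂' A₂}, SConsDir s' s → DCons A₁' A₁ → DCons A₂' A₂ →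
    DCons (.sum s' A₁' A₂') (.sum s A₁ A₂)

/-! ### Bidirectional typing -/

mutual
inductive Chk : List STy → SExp → STy → Prop
| unit : ∀ {Γ}, Chk Γ .unit .unit
| lam : ∀ {Γ A B b}, Chk (A :: Γ) b B → Chk Γ (.lam A b) (.arr A B)
| inj1 : ∀ {Γ e A₁ A₂}, Chk Γ e A₁ → Chk Γ (.inj true e) (.sum .plusQ1 A₁ A₂)
| inj2 : ∀ {Γ e A₁ A₂}, Chk Γ e A₂ → Chk Γ (.inj false e) (.sum .plusQ2 A₁ A₂)
| case2 : ∀ {Γ e b₁ b₂ s A₁ A₂ C}, Syn Γ e (.sum s A₁ A₂) →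
    Chk (A₁ :: Γ) b₁ C → Chk (A₂ :: Γ) b₂ C → Chk Γ (.case2 e b₁ b₂) C
| case1 : ∀ {Γ i e b s A₁ A₂ C}, Syn Γ e (.sum s A₁ A₂) →
    s = (if i then SCons.plus1 else SCons.plus2) →
    Chk ((if i then A₁ else A₂) :: Γ) b C → Chk Γ (.case1 i e b) C
| sub : ∀ {Γ e A B}, Syn Γ e A → DCons A B → Chk Γ e B

inductive Syn : List STy → SExp → STy → Prop
| var : ∀ {Γ n A}, Γ[n]? = some A → Syn Γ (.var n) A
| anno : ∀ {Γ e A}, Chk Γ e A → Syn Γ (.anno e A) A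
| app : ∀ {Γ f a A B}, Syn Γ f (.arr A B) → Chk Γ a A → Syn Γ (.app f a) B
end

/-! ### Type assignment -/

inductive SAssign : List STy → SExp → STy → Prop
| var : ∀ {Γ n A}, Γ[n]? = some A → SAssign Γ (.var n) A
| unit : ∀ {Γ}, SAssign Γ .unit .unit
| lam : ∀ {Γ A B b}, SAssign (A :: Γ) b B → SAssign Γ (.lam A b) (.arr A B)
| app : ∀ {Γ f a A B}, SAssign Γ f (.arr A B) → SAssign Γ a A → SAssign Γ (.app f a) B
| inj1 : ∀ {Γ e A₁ A₂}, SAssign Γ e A₁ → SAssign Γ (.inj true e) (.sum .plusQ1 A₁ A₂)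
| inj2 : ∀ {Γ e A₁ A₂}, SAssign Γ e A₂ → SAssign Γ (.inj false e) (.sum .plusQ2 A₁ A₂)
| case2 : ∀ {Γ e b₁ b₂ s A₁ A₂ C}, SAssign Γ e (.sum s A₁ A₂) →
    SAssign (A₁ :: Γ) b₁ C → SAssign (A₂ :: Γ) b₂ C → SAssign Γ (.case2 e b₁ b₂) C
| case1 : ∀ {Γ i e b s A₁ A₂ C}, SAssign Γ e (.sum s A₁ A₂) →
    s = (if i then SCons.plus1 else SCons.plus2) →
    SAssign ((if i then A₁ else A₂) :: Γ) b C → SAssign Γ (.case1 i e b) C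
| anno : ∀ {Γ e A}, SAssign Γ e A → SAssign Γ (.anno e A) A
| sub : ∀ {Γ e A B}, SAssign Γ e A → DCons A B → SAssign Γ e B

/-! ### Coercion generation -/

inductive Coerce : STy → STy → (Tm → Tm) → Prop
| unit : Coerce .unit .unit id
| arr : ∀ {A₁ A₁' A₂ A₂' C₁ C₂}, Coerce A₁ A₁' C₁ → Coerce A₂' A₂ C₂ →
    Coerce (.arr A₁' A₂') (.arr A₁ A₂)
      (fun M => .lam A₁.trans (C₂ (.app (M.shift 1 0) (C₁ (.var 0)))))
| oneL : ∀ {s' s A₁' A₁ A₂' A₂ C₁}, (s' = .plus1 ∨ s' = .plusQ1) → SConsDir s' s →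
    Coerce A₁' A₁ C₁ →
    Coerce (.sum s' A₁' A₂') (.sum s A₁ A₂)
      (fun M => .cast s'.trans s.trans (.case1 true M (.inj true (C₁ (.var 0)))))
| oneR : ∀ {s' s A₁' A₁ A₂' A₂ C₂}, (s' = .plus2 ∨ s' = .plusQ2) → SConsDir s' s →
    Coerce A₂' A₂ C₂ →
    Coerce (.sum s' A₁' A₂') (.sum s A₁ A₂)
      (fun M => .cast s'.trans s.trans (.case1 false M (.inj false (C₂ (.var 0)))))
| two : ∀ {s' s A₁' A₁ A₂' A₂ C₁ C₂}, (s' = .plus ∨ s' = .plusQ) → SConsDir s' s →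
    Coerce A₁' A₁ C₁ → Coerce A₂' A₂ C₂ →
    Coerce (.sum s' A₁' A₂') (.sum s A₁ A₂)
      (fun M => .cast s'.trans s.trans
        (.case2 M (.cast .plus1 s'.trans (.inj true (C₁ (.var 0))))
                  (.cast .plus2 s'.trans (.inj false (C₂ (.var 0))))))

/-! ### Type-directed translation -/

inductive Translate : List STy → SExp → STy → Tm → Prop
| var : ∀ {Γ n A}, Γ[n]? = some A → Translate Γ (.var n) A (.var n)
| unit : ∀ {Γ}, Translate Γ .unit .unit .unit
| lam : ∀ {Γ A B b M}, Translate (A :: Γ) b B M → Translate Γ (.lam A b) (.arr A B) (.lam A.trans M)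
| app : ∀ {Γ f a A B Mf Ma}, Translate Γ f (.arr A B) Mf → Translate Γ a A Ma →
    Translate Γ (.app f a) B (.app Mf Ma)
| inj1 : ∀ {Γ e A₁ A₂ M}, Translate Γ e A₁ M →
    Translate Γ (.inj true e) (.sum .plusQ1 A₁ A₂) (.inj true M)
| inj2 : ∀ {Γ e A₁ A₂ M}, Translate Γ e A₂ M →
    Translate Γ (.inj false e) (.sum .plusQ2 A₁ A₂) (.inj false M)
| case2 : ∀ {Γ e b₁ b₂ s A₁ A₂ C Me M₁ M₂}, Translate Γ e (.sum s A₁ A₂) Me →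
    Translate (A₁ :: Γ) b₁ C M₁ → Translate (A₂ :: Γ) b₂ C M₂ →
    Translate Γ (.case2 e b₁ b₂) C (.case2 Me M₁ M₂)
| case1 : ∀ {Γ i e b s A₁ A₂ C Me Mb}, Translate Γ e (.sum s A₁ A₂) Me →
    s = (if i then SCons.plus1 else SCons.plus2) →
    Translate ((if i then A₁ else A₂) :: Γ) b C Mb →
    Translate Γ (.case1 i e b) C (.case1 i Me Mb)
| anno : ∀ {Γ e A M}, Translate Γ e A M → Translate Γ (.anno e A) A M
| sub : ∀ {Γ e A B M C}, Translate Γ e A M → DCons A B → Coerce A B C → Translate Γ e B (C M)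

/-! ### Static source programs -/

def SCons.isStatic : SCons → Prop := (· = SCons.plus)

def STy.isStatic : STy → Prop
| .unit => True
| .arr A B => A.isStatic ∧ B.isStatic
| .sum s A B => s.isStatic ∧ A.isStatic ∧ B.isStatic

def SExp.isStatic : SExp → Prop
| .var _ => True
| .unit => True
| .lam A b => A.isStatic ∧ b.isStatic
| .app f a => f.isStatic ∧ a.isStatic
| .inj _ e => e.isStatic
| .case2 e b₁ b₂ => e.isStatic ∧ b₁.isStatic ∧ b₂.isStatic
| .case1 _ e b => e.isStatic ∧ b.isStatic
| .anno e A => e.isStatic ∧ A.isStatic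

def staticCtx (Γ : List STy) : Prop := ∀ A ∈ Γ, A.isStatic

/-! ## Auxiliary lemmas -/

theorem value_not_step : ∀ {v n : Tm}, Value v → Step v n → False := by
  intro v n hv hs
  induction hv generalizing n with
  | unit => cases hs
  | lam => cases hs
  | inj i m hm ih =>
    cases hs with
    | injC h => exact ih h
    | mfInj => cases hm

theorem mf_not_step : ∀ {n : Tm}, Step .matchfail n → False := by
  intro n h; cases h

theorem step_det : ∀ {a b c : Tm}, Step a b → Step a c → b = c := by
  intro a b c h1 h2
  induction h1 generalizing c <;> cases h2 <;>
    first
    | rfl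
    | (congr 1; solve | (apply_assumption; assumption) | rfl)
    | (exfalso
       try casesm* Value (Tm.inj _ _), Value Tm.matchfail,
         Step (Tm.inj _ _) _, Step (Tm.lam _ _) _, Step Tm.unit _, Step Tm.matchfail _
       all_goals solve_by_elim [value_not_step, mf_not_step])

/-- From `a`, a normal form is unique: anything reachable reaches it. -/
theorem steps_to_normal {a b : Tm} (hab : Steps a b) (hb : ∀ y, ¬ Step b y) :
    ∀ {c}, Steps a c → Steps c b := by
  intro c hac
  induction hac with
  | refl => exact hab
  | tail hxc hstep ih =>
    rename_i x c'
    cases (Relation.ReflTransGen.cases_head ih) with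
    | inl h => exact absurd (h ▸ hstep) (hb _)
    | inr h =>
      obtain ⟨d, hd, hdb⟩ := h
      rw [step_det hstep hd]; exact hdb

theorem steps_lift {f : Tm → Tm} (hf : ∀ {x y}, Step x y → Step (f x) (f y))
    {a b : Tm} (h : Steps a b) : Steps (f a) (f b) :=
  Relation.ReflTransGen.lift f (fun _ _ h => hf h) _ _ h

theorem steps_app1 {m m' n : Tm} (h : Steps m m') : Steps (.app m n) (.app m' n) :=
  steps_lift (fun hs => Step.app1 hs) h
theorem steps_app2 {v n n' : Tm} (hv : Value v) (h : Steps n n') :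
    Steps (.app v n) (.app v n') :=
  steps_lift (fun hs => Step.app2 hv hs) h
theorem steps_inj {i} {m m' : Tm} (h : Steps m m') : Steps (.inj i m) (.inj i m') :=
  steps_lift (fun hs => Step.injC hs) h
theorem steps_case2 {m m' b₁ b₂ : Tm} (h : Steps m m') :
    Steps (.case2 m b₁ b₂) (.case2 m' b₁ b₂) :=
  steps_lift (fun hs => Step.case2C hs) h
theorem steps_case1 {i} {m m' b : Tm} (h : Steps m m') :
    Steps (.case1 i m b) (.case1 i m' b) :=
  steps_lift (fun hs => Step.case1C hs) h
theorem steps_cast {φ₁ φ₂} {m m' : Tm} (h : Steps m m') :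
    Steps (.cast φ₁ φ₂ m) (.cast φ₁ φ₂ m') :=
  steps_lift (fun hs => Step.castC hs) h

/-! ## Typing: weakening, substitution, preservation -/

theorem typed_weaken : ∀ {Γ m T}, Typed Γ m T →
    ∀ {Γ₁ Γ₂ : List TTy} (U : TTy), Γ = Γ₁ ++ Γ₂ →
    Typed (Γ₁ ++ U :: Γ₂) (m.shift 1 Γ₁.length) T := by
  intro Γ m T h
  induction h with
  | @var Γ n T hget =>
    intro Γ₁ Γ₂ U hΓ; subst hΓ
    simp only [Tm.shift]
    split
    · apply Typed.var
      rename_i hn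
      rw [List.getElem?_append_left hn] at hget
      rw [List.getElem?_append_left (by omega)]
      exact hget
    · apply Typed.var
      rename_i hn
      push_neg at hn
      rw [List.getElem?_append_right hn] at hget
      rw [List.getElem?_append_right (by omega)]
      have : n + 1 - Γ₁.length = (n - Γ₁.length) + 1 := by omega
      rw [this]
      simpa using hget
  | unit => intro _ _ _ _; exact Typed.unit
  | @lam Γ T₁ T₂ b hb ih =>
    intro Γ₁ Γ₂ U hΓ; subst hΓ
    exact Typed.lam (ih (Γ₁ := T₁ :: Γ₁) U rfl)
  | app hf ha ihf iha =>
    intro Γ₁ Γ₂ U hΓ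
    exact Typed.app (ihf U hΓ) (iha U hΓ)
  | inj hm hok ih =>
    intro Γ₁ Γ₂ U hΓ
    exact Typed.inj (ih U hΓ) hok
  | @case2 Γ m b₁ b₂ φ T₁ T₂ T hm h₁ h₂ ihm ih₁ ih₂ =>
    intro Γ₁ Γ₂' U hΓ; subst hΓ
    exact Typed.case2 (ihm U rfl) (ih₁ (Γ₁ := T₁ :: Γ₁) U rfl) (ih₂ (Γ₁ := T₂ :: Γ₁) U rfl)
  | @case1 Γ i m b T₁ T₂ T hm hb ihm ihb =>
    intro Γ₁ Γ₂' U hΓ; subst hΓ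
    exact Typed.case1 (ihm U rfl) (ihb (Γ₁ := (if i then T₁ else T₂) :: Γ₁) U rfl)
  | cast hm ih =>
    intro Γ₁ Γ₂ U hΓ
    exact Typed.cast (ih U hΓ)
  | matchfail => intro _ _ _ _; exact Typed.matchfail

theorem typed_weaken0 {Γ m T} (U : TTy) (h : Typed Γ m T) :
    Typed (U :: Γ) (m.shift 1 0) T :=
  typed_weaken h (Γ₁ := []) U rfl

theorem typed_subst : ∀ {Γ m T}, Typed Γ m T →
    ∀ {Γ₁ Γ₂ : List TTy} {U : TTy} {s}, Γ = Γ₁ ++ U :: Γ₂ →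
    Typed (Γ₁ ++ Γ₂) s U → Typed (Γ₁ ++ Γ₂) (m.subst Γ₁.length s) T := by
  intro Γ m T h
  induction h with
  | @var Γ n T hget =>
    intro Γ₁ Γ₂ U s hΓ hs; subst hΓ
    simp only [Tm.subst]
    split
    · rename_i hn; subst hn
      have : (Γ₁ ++ U :: Γ₂)[Γ₁.length]? = some U := by
        rw [List.getElem?_append_right (le_refl _)]; simp
      rw [this] at hget; cases hget; exact hs
    · split
      · rename_i hne hlt
        apply Typed.var
        rw [List.getElem?_append_right (by omega)] at hget
        rw [List.getElem?_append_right (by omega)]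
        have : n - Γ₁.length = (n - 1 - Γ₁.length) + 1 := by omega
        rw [this] at hget
        simpa using hget
      · rename_i hne hlt
        apply Typed.var
        have hn : n < Γ₁.length := by omega
        rw [List.getElem?_append_left hn] at hget
        rw [List.getElem?_append_left hn]
        exact hget
  | unit => intro _ _ _ _ _ _; exact Typed.unit
  | @lam Γ T₁ T₂ b hb ih =>
    intro Γ₁ Γ₂ U s hΓ hs; subst hΓ
    exact Typed.lam (ih (Γ₁ := T₁ :: Γ₁) rfl (typed_weaken0 T₁ hs))
  | app hf ha ihf iha =>
    intro Γ₁ Γ₂ U s hΓ hs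
    exact Typed.app (ihf hΓ hs) (iha hΓ hs)
  | inj hm hok ih =>
    intro Γ₁ Γ₂ U s hΓ hs
    exact Typed.inj (ih hΓ hs) hok
  | @case2 Γ m b₁ b₂ φ T₁ T₂ T hm h₁ h₂ ihm ih₁ ih₂ =>
    intro Γ₁ Γ₂' U s hΓ hs; subst hΓ
    exact Typed.case2 (ihm rfl hs) (ih₁ (Γ₁ := T₁ :: Γ₁) rfl (typed_weaken0 T₁ hs))
      (ih₂ (Γ₁ := T₂ :: Γ₁) rfl (typed_weaken0 T₂ hs))
  | @case1 Γ i m b T₁ T₂ T hm hb ihm ihb =>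
    intro Γ₁ Γ₂' U s hΓ hs; subst hΓ
    exact Typed.case1 (ihm rfl hs)
      (ihb (Γ₁ := (if i then T₁ else T₂) :: Γ₁) rfl (typed_weaken0 _ hs))
  | cast hm ih =>
    intro Γ₁ Γ₂ U s hΓ hs
    exact Typed.cast (ih hΓ hs)
  | matchfail => intro _ _ _ _ _ _; exact Typed.matchfail

theorem typed_subst0 {Γ b s T U} (hb : Typed (U :: Γ) b T) (hs : Typed Γ s U) :
    Typed Γ (b.subst0 s) T :=
  typed_subst hb (Γ₁ := []) rfl hs

theorem preservation : ∀ {Γ m n T}, Step m n → Typed Γ m T → Typed Γ n T := by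
  intro Γ m n T hs
  induction hs generalizing Γ T with
  | beta hv =>
    intro h
    cases h with
    | app hf ha => cases hf with
      | lam hb => exact typed_subst0 hb ha
  | app1 _ ih => intro h; cases h with
    | app hf ha => exact Typed.app (ih hf) ha
  | app2 _ _ ih => intro h; cases h with
    | app hf ha => exact Typed.app hf (ih ha)
  | injC _ ih => intro h; cases h with
    | inj hm hok => exact Typed.inj (ih hm) hok
  | case2C _ ih => intro h; cases h with
    | case2 hm h₁ h₂ => exact Typed.case2 (ih hm) h₁ h₂
  | case1C _ ih => intro h; cases h with
    | case1 hm hb => exact Typed.case1 (ih hm) hb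
  | castC _ ih => intro h; cases h with
    | cast hm => exact Typed.cast (ih hm)
  | @case2R i v b₁ b₂ hv => intro h; cases h with
    | case2 hm h₁ h₂ =>
      cases hm with
      | inj hv' hok =>
        cases i
        · exact typed_subst0 h₂ hv'
        · exact typed_subst0 h₁ hv'
  | @case1R i v b hv => intro h; cases h with
    | case1 hm hb =>
      cases hm with
      | inj hv' hok => exact typed_subst0 hb hv'
  | castOk hv hok => intro h; cases h with
    | cast hm => cases hm with
      | inj hv' _ => exact Typed.inj hv' hok
  | castFail _ _ => intro _; exact Typed.matchfail
  | mfApp1 => intro _; exact Typed.matchfail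
  | mfApp2 _ => intro _; exact Typed.matchfail
  | mfInj => intro _; exact Typed.matchfail
  | mfCase2 => intro _; exact Typed.matchfail
  | mfCase1 => intro _; exact Typed.matchfail
  | mfCast => intro _; exact Typed.matchfail

theorem preservation_steps {Γ m n T} (hs : Steps m n) (h : Typed Γ m T) : Typed Γ n T := by
  induction hs with
  | refl => exact h
  | tail _ hstep ih => exact preservation hstep ih

/-! ## Precision: shift and substitution -/

theorem tprec_shift : ∀ {m' m}, TPrec m' m → ∀ d c, TPrec (m'.shift d c) (m.shift d c) := by
  intro m' m h
  induction h with
  | var => intro d c; simp only [Tm.shift]; split <;> exact TPrec.var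
  | unit => intro d c; exact TPrec.unit
  | lam _ ih => intro d c; exact TPrec.lam (ih d (c+1))
  | app _ _ ihf iha => intro d c; exact TPrec.app (ihf d c) (iha d c)
  | inj _ ih => intro d c; exact TPrec.inj (ih d c)
  | case2 _ _ _ ihm ih₁ ih₂ =>
    intro d c; exact TPrec.case2 (ihm d c) (ih₁ d (c+1)) (ih₂ d (c+1))
  | case1 _ _ ihm ihb => intro d c; exact TPrec.case1 (ihm d c) (ihb d (c+1))
  | @case1case2 i m' m b' b₁ b₂ _ _ ihm ihb =>
    intro d c
    apply TPrec.case1case2 (ihm d c)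
    have := ihb d (c+1)
    cases i <;> simpa using this
  | matchfail => intro d c; exact TPrec.matchfail
  | cast hφ _ ih => intro d c; exact TPrec.cast hφ (ih d c)
  | castL _ ih => intro d c; exact TPrec.castL (ih d c)

theorem tprec_subst : ∀ {b' b}, TPrec b' b → ∀ {s' s} (k : Nat), TPrec s' s →
    TPrec (b'.subst k s') (b.subst k s) := by
  intro b' b h
  induction h with
  | var =>
    intro s' s k hs; simp only [Tm.subst]
    split
    · exact hs
    · split <;> exact TPrec.var
  | unit => intro s' s k hs; exact TPrec.unit
  | lam _ ih =>
    intro s' s k hs; exact TPrec.lam (ih (k+1) (tprec_shift hs 1 0))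
  | app _ _ ihf iha => intro s' s k hs; exact TPrec.app (ihf k hs) (iha k hs)
  | inj _ ih => intro s' s k hs; exact TPrec.inj (ih k hs)
  | case2 _ _ _ ihm ih₁ ih₂ =>
    intro s' s k hs
    exact TPrec.case2 (ihm k hs) (ih₁ (k+1) (tprec_shift hs 1 0)) (ih₂ (k+1) (tprec_shift hs 1 0))
  | case1 _ _ ihm ihb =>
    intro s' s k hs; exact TPrec.case1 (ihm k hs) (ihb (k+1) (tprec_shift hs 1 0))
  | @case1case2 i m' m b' b₁ b₂ _ _ ihm ihb =>
    intro s' s k hs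
    apply TPrec.case1case2 (ihm k hs)
    have := ihb (k+1) (tprec_shift hs 1 0)
    cases i <;> simpa using this
  | matchfail => intro s' s k hs; exact TPrec.matchfail
  | cast hφ _ ih => intro s' s k hs; exact TPrec.cast hφ (ih k hs)
  | castL _ ih => intro s' s k hs; exact TPrec.castL (ih k hs)

theorem tprec_subst0 {b' b s' s : Tm} (hb : TPrec b' b) (hs : TPrec s' s) :
    TPrec (b'.subst0 s') (b.subst0 s) :=
  tprec_subst hb 0 hs

/-! ## Canonical forms and catch-up -/

theorem canonical_sum {u : Tm} {φ T₁ T₂} (hv : Value u) (ht : Typed [] u (.sum φ T₁ T₂)) :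
    ∃ j w, u = .inj j w ∧ Value w ∧ tagOk j φ := by
  cases hv with
  | unit => cases ht
  | lam => cases ht
  | inj j w hw =>
    cases ht with
    | inj _ hok => exact ⟨j, w, rfl, hw, hok⟩

/-- Catch-up: a well-typed term below a value reduces to a value below it, or to matchfail. -/
theorem catchup : ∀ {m' v}, TPrec m' v → Value v → ∀ {T'}, Typed [] m' T' →
    ∃ u, Steps m' u ∧ ((Value u ∧ TPrec u v) ∨ u = .matchfail) := by
  intro m' v h
  induction h with
  | var => intro hv; cases hv
  | unit =>
    intro _ _ _; exact ⟨.unit, Relation.ReflTransGen.refl, Or.inl ⟨Value.unit, TPrec.unit⟩⟩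
  | @lam T' T b' b hb _ =>
    intro _ _ _
    exact ⟨.lam T' b', Relation.ReflTransGen.refl, Or.inl ⟨Value.lam _ _, TPrec.lam hb⟩⟩
  | app _ _ _ _ => intro hv; cases hv
  | @inj i w' w hw ih =>
    intro hv T' ht
    cases hv with
    | inj _ _ hwv =>
      cases ht with
      | inj htw _ =>
        obtain ⟨u, hsteps, hu⟩ := ih hwv htw
        cases hu with
        | inl h =>
          exact ⟨.inj i u, steps_inj hsteps,
            Or.inl ⟨Value.inj _ _ h.1, TPrec.inj h.2⟩⟩
        | inr h =>
          subst h
          exact ⟨.matchfail, Relation.ReflTransGen.tail (steps_inj hsteps) Step.mfInj,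
            Or.inr rfl⟩
  | case2 _ _ _ _ _ _ => intro hv; cases hv
  | case1 _ _ _ _ => intro hv; cases hv
  | case1case2 _ _ _ _ => intro hv; cases hv
  | matchfail =>
    intro _ _ _; exact ⟨.matchfail, Relation.ReflTransGen.refl, Or.inr rfl⟩
  | cast _ _ _ => intro hv; cases hv
  | @castL φ₁ φ₂ m'' m hm ih =>
    intro hv T' ht
    cases ht with
    | cast htm =>
      obtain ⟨u, hsteps, hu⟩ := ih hv htm
      cases hu with
      | inl h =>
        obtain ⟨huv, hup⟩ := h
        have htu := preservation_steps hsteps htm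
        obtain ⟨j, w, rfl, hwv, _⟩ := canonical_sum huv htu
        by_cases hok : tagOk j φ₂
        · exact ⟨.inj j w,
            Relation.ReflTransGen.tail (steps_cast hsteps) (Step.castOk hwv hok),
            Or.inl ⟨huv, hup⟩⟩
        · exact ⟨.matchfail,
            Relation.ReflTransGen.tail (steps_cast hsteps) (Step.castFail hwv hok),
            Or.inr rfl⟩
      | inr h =>
        subst h
        exact ⟨.matchfail, Relation.ReflTransGen.tail (steps_cast hsteps) Step.mfCast,
          Or.inr rfl⟩

/-! ## Inversion helpers -/

theorem tprec_mf_aux : ∀ {m' m}, TPrec m' m → m = .matchfail → Steps m' .matchfail := by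
  intro m' m h
  induction h with
  | matchfail => intro _; exact Relation.ReflTransGen.refl
  | castL _ ih =>
    intro he
    exact Relation.ReflTransGen.tail (steps_cast (ih he)) Step.mfCast
  | _ => intro he <;> cases he

theorem tprec_mf {m' : Tm} (h : TPrec m' .matchfail) : Steps m' .matchfail :=
  tprec_mf_aux h rfl

theorem tprec_value_inj {u v : Tm} {j : Bool} (hv : Value u) (h : TPrec u (.inj j v)) :
    ∃ w, u = .inj j w ∧ TPrec w v := by
  cases h with
  | inj hw => exact ⟨_, rfl, hw⟩
  | matchfail => cases hv
  | castL _ => cases hv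

theorem tprec_value_lam {u b : Tm} {T : TTy} (hv : Value u) (h : TPrec u (.lam T b)) :
    ∃ T'' b'', u = .lam T'' b'' ∧ TPrec b'' b := by
  cases h with
  | lam hb => exact ⟨_, _, rfl, hb⟩
  | matchfail => cases hv
  | castL _ => cases hv

theorem tagOk_eq {j i : Bool} (h : tagOk j (if i then Tag.plus1 else Tag.plus2)) : j = i := by
  cases i <;> cases j <;> simp [tagOk] at h ⊢

theorem castprec_fail {φ₁' φ₂' φ₁ φ₂ : Tag} {j : Bool}
    (hcp : CastPrec φ₁' φ₂' φ₁ φ₂) (h1 : tagOk j φ₁') (h2 : ¬ tagOk j φ₂) :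
    ¬ tagOk j φ₂' := by
  cases hcp with
  | refl => exact h2
  | mcBc hmc _ =>
    rcases hmc with ⟨ha, hb⟩ | ⟨ha, hb⟩ <;> subst ha <;> subst hb <;>
      cases j <;> simp [tagOk] at h1 ⊢
  | bcSc _ hsc => exact absurd (hsc ▸ Or.inl rfl) h2
  | mcSc _ hsc => exact absurd (hsc ▸ Or.inl rfl) h2
  | scSc => exact absurd (Or.inl rfl) h2

/-! ## Simulation -/

theorem sim : ∀ {M' M}, TPrec M' M → ∀ {N T' T}, Step M N →
    Typed [] M' T' → Typed [] M T →
    ∃ N', Steps M' N' ∧ TPrec N' N := by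
  intro M' M h
  induction h with
  | var => intro N T' T hs _ _; cases hs
  | unit => intro N T' T hs _ _; cases hs
  | lam _ _ => intro N T' T hs _ _; cases hs
  | @app f' f a' a hf ha ihf iha =>
    intro N T' T hs hty' hty
    cases hty' with | app htf' hta' =>
    cases hty with | app htf hta =>
    cases hs with
    | @beta Tb b v hv =>
      obtain ⟨u, hsu, hu⟩ := catchup hf (Value.lam _ _) htf'
      cases hu with
      | inr he =>
        subst he
        exact ⟨.matchfail,
          Relation.ReflTransGen.tail (steps_app1 hsu) Step.mfApp1, TPrec.matchfail⟩
      | inl hu =>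
        obtain ⟨huv, hup⟩ := hu
        obtain ⟨T'', b'', rfl, hb⟩ := tprec_value_lam huv hup
        obtain ⟨w, hsw, hw⟩ := catchup ha hv hta'
        cases hw with
        | inr he =>
          subst he
          exact ⟨.matchfail,
            Relation.ReflTransGen.tail
              ((steps_app1 hsu).trans (steps_app2 huv hsw)) (Step.mfApp2 huv),
            TPrec.matchfail⟩
        | inl hw =>
          exact ⟨_, Relation.ReflTransGen.tail
              ((steps_app1 hsu).trans (steps_app2 huv hsw)) (Step.beta hw.1),
            tprec_subst0 hb hw.2⟩
    | app1 hstep =>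
      obtain ⟨g, hsg, hg⟩ := ihf hstep htf' htf
      exact ⟨_, steps_app1 hsg, TPrec.app hg ha⟩
    | app2 hv hstep =>
      obtain ⟨u, hsu, hu⟩ := catchup hf hv htf'
      cases hu with
      | inr he =>
        subst he
        exact ⟨.matchfail,
          Relation.ReflTransGen.tail (steps_app1 hsu) Step.mfApp1, TPrec.matchfail⟩
      | inl hu =>
        obtain ⟨g, hsg, hg⟩ := iha hstep hta' hta
        exact ⟨_, (steps_app1 hsu).trans (steps_app2 hu.1 hsg), TPrec.app hu.2 hg⟩
    | mfApp1 =>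
      exact ⟨.matchfail,
        Relation.ReflTransGen.tail (steps_app1 (tprec_mf hf)) Step.mfApp1, TPrec.matchfail⟩
    | mfApp2 hv =>
      obtain ⟨u, hsu, hu⟩ := catchup hf hv htf'
      cases hu with
      | inr he =>
        subst he
        exact ⟨.matchfail,
          Relation.ReflTransGen.tail (steps_app1 hsu) Step.mfApp1, TPrec.matchfail⟩
      | inl hu =>
        exact ⟨.matchfail,
          Relation.ReflTransGen.tail
            ((steps_app1 hsu).trans (steps_app2 hu.1 (tprec_mf ha))) (Step.mfApp2 hu.1),
          TPrec.matchfail⟩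
  | @inj i m' m hm ih =>
    intro N T' T hs hty' hty
    cases hty' with | inj htm' _ =>
    cases hty with | inj htm _ =>
    cases hs with
    | injC hstep =>
      obtain ⟨g, hsg, hg⟩ := ih hstep htm' htm
      exact ⟨_, steps_inj hsg, TPrec.inj hg⟩
    | mfInj =>
      exact ⟨.matchfail,
        Relation.ReflTransGen.tail (steps_inj (tprec_mf hm)) Step.mfInj, TPrec.matchfail⟩
  | @case2 m' m b₁' b₁ b₂' b₂ hm h₁ h₂ ihm _ _ =>
    intro N T' T hs hty' hty
    cases hty' with | case2 htm' htb₁' htb₂' =>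
    cases hty with | case2 htm htb₁ htb₂ =>
    cases hs with
    | case2C hstep =>
      obtain ⟨g, hsg, hg⟩ := ihm hstep htm' htm
      exact ⟨_, steps_case2 hsg, TPrec.case2 hg h₁ h₂⟩
    | @case2R j v _ _ hv =>
      obtain ⟨u, hsu, hu⟩ := catchup hm (Value.inj j v hv) htm'
      cases hu with
      | inr he =>
        subst he
        exact ⟨.matchfail,
          Relation.ReflTransGen.tail (steps_case2 hsu) Step.mfCase2, TPrec.matchfail⟩
      | inl hu =>
        obtain ⟨huv, hup⟩ := hu
        obtain ⟨w, rfl, hw⟩ := tprec_value_inj huv hup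
        cases huv with | inj _ _ hwv =>
        refine ⟨_, Relation.ReflTransGen.tail (steps_case2 hsu) (Step.case2R hwv), ?_⟩
        cases j
        · exact tprec_subst0 h₂ hw
        · exact tprec_subst0 h₁ hw
    | mfCase2 =>
      exact ⟨.matchfail,
        Relation.ReflTransGen.tail (steps_case2 (tprec_mf hm)) Step.mfCase2, TPrec.matchfail⟩
  | @case1 i m' m b' b hm hb ihm _ =>
    intro N T' T hs hty' hty
    cases hty' with | case1 htm' htb' =>
    cases hty with | case1 htm htb =>
    cases hs with
    | case1C hstep =>
      obtain ⟨g, hsg, hg⟩ := ihm hstep htm' htm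
      exact ⟨_, steps_case1 hsg, TPrec.case1 hg hb⟩
    | @case1R _ v _ hv =>
      obtain ⟨u, hsu, hu⟩ := catchup hm (Value.inj i v hv) htm'
      cases hu with
      | inr he =>
        subst he
        exact ⟨.matchfail,
          Relation.ReflTransGen.tail (steps_case1 hsu) Step.mfCase1, TPrec.matchfail⟩
      | inl hu =>
        obtain ⟨huv, hup⟩ := hu
        obtain ⟨w, rfl, hw⟩ := tprec_value_inj huv hup
        cases huv with | inj _ _ hwv =>
        exact ⟨_, Relation.ReflTransGen.tail (steps_case1 hsu) (Step.case1R hwv),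
          tprec_subst0 hb hw⟩
    | mfCase1 =>
      exact ⟨.matchfail,
        Relation.ReflTransGen.tail (steps_case1 (tprec_mf hm)) Step.mfCase1, TPrec.matchfail⟩
  | @case1case2 i m' m b' b₁ b₂ hm hb ihm _ =>
    intro N T' T hs hty' hty
    cases hty' with | case1 htm' htb' =>
    cases hty with | case2 htm htb₁ htb₂ =>
    cases hs with
    | case2C hstep =>
      obtain ⟨g, hsg, hg⟩ := ihm hstep htm' htm
      exact ⟨_, steps_case1 hsg, TPrec.case1case2 hg hb⟩
    | @case2R j v _ _ hv =>
      obtain ⟨u, hsu, hu⟩ := catchup hm (Value.inj j v hv) htm'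
      cases hu with
      | inr he =>
        subst he
        exact ⟨.matchfail,
          Relation.ReflTransGen.tail (steps_case1 hsu) Step.mfCase1, TPrec.matchfail⟩
      | inl hu =>
        obtain ⟨huv, hup⟩ := hu
        obtain ⟨w, rfl, hw⟩ := tprec_value_inj huv hup
        -- typing forces j = i
        have htu := preservation_steps hsu htm'
        cases htu with
        | inj _ hok =>
          have hji : j = i := tagOk_eq hok
          subst hji
          cases huv with | inj _ _ hwv =>
          exact ⟨_, Relation.ReflTransGen.tail (steps_case1 hsu) (Step.case1R hwv),
            tprec_subst0 hb hw⟩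
    | mfCase2 =>
      exact ⟨.matchfail,
        Relation.ReflTransGen.tail (steps_case1 (tprec_mf hm)) Step.mfCase1, TPrec.matchfail⟩
  | matchfail =>
    intro N T' T hs _ _
    exact ⟨.matchfail, Relation.ReflTransGen.refl, TPrec.matchfail⟩
  | @cast φ₁' φ₂' φ₁ φ₂ m' m hcp hm ihm =>
    intro N T' T hs hty' hty
    cases hty' with | cast htm' =>
    cases hty with | cast htm =>
    cases hs with
    | castC hstep =>
      obtain ⟨g, hsg, hg⟩ := ihm hstep htm' htm
      exact ⟨_, steps_cast hsg, TPrec.cast hcp hg⟩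
    | @castOk _ _ j v hv hok =>
      obtain ⟨u, hsu, hu⟩ := catchup hm (Value.inj j v hv) htm'
      cases hu with
      | inr he =>
        subst he
        exact ⟨.matchfail,
          Relation.ReflTransGen.tail (steps_cast hsu) Step.mfCast, TPrec.matchfail⟩
      | inl hu =>
        obtain ⟨huv, hup⟩ := hu
        obtain ⟨w, rfl, hw⟩ := tprec_value_inj huv hup
        cases huv with | inj _ _ hwv =>
        by_cases hok' : tagOk j φ₂'
        · exact ⟨_, Relation.ReflTransGen.tail (steps_cast hsu) (Step.castOk hwv hok'),
            TPrec.inj hw⟩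
        · exact ⟨.matchfail,
            Relation.ReflTransGen.tail (steps_cast hsu) (Step.castFail hwv hok'),
            TPrec.matchfail⟩
    | @castFail _ _ j v hv hnok =>
      obtain ⟨u, hsu, hu⟩ := catchup hm (Value.inj j v hv) htm'
      cases hu with
      | inr he =>
        subst he
        exact ⟨.matchfail,
          Relation.ReflTransGen.tail (steps_cast hsu) Step.mfCast, TPrec.matchfail⟩
      | inl hu =>
        obtain ⟨huv, hup⟩ := hu
        obtain ⟨w, rfl, hw⟩ := tprec_value_inj huv hup
        have htu := preservation_steps hsu htm'
        cases htu with
        | inj _ hok1 =>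
          cases huv with | inj _ _ hwv =>
          have hnok' := castprec_fail hcp hok1 hnok
          exact ⟨.matchfail,
            Relation.ReflTransGen.tail (steps_cast hsu) (Step.castFail hwv hnok'),
            TPrec.matchfail⟩
    | mfCast =>
      exact ⟨.matchfail,
        Relation.ReflTransGen.tail (steps_cast (tprec_mf hm)) Step.mfCast, TPrec.matchfail⟩
  | @castL φ₁ φ₂ m'' m hm ih =>
    intro N T' T hs hty' hty
    cases hty' with | cast htm' =>
    obtain ⟨g, hsg, hg⟩ := ih hs htm' hty
    exact ⟨_, steps_cast hsg, TPrec.castL hg⟩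

theorem sims : ∀ {M N}, Steps M N → ∀ {M' T' T}, TPrec M' M →
    Typed [] M' T' → Typed [] M T →
    ∃ N', Steps M' N' ∧ TPrec N' N := by
  intro M N hs
  induction hs with
  | refl => intro M' T' T h _ _; exact ⟨M', Relation.ReflTransGen.refl, h⟩
  | tail hMN hstep ih =>
    intro M' T' T h hty' hty
    obtain ⟨N', hsN', hN'⟩ := ih h hty' hty
    have htyN := preservation_steps hMN hty
    have htyN' := preservation_steps hsN' hty'
    obtain ⟨N'', hsN'', hN''⟩ := sim hN' hstep htyN' htyN
    exact ⟨N'', hsN'.trans hsN'', hN''⟩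

/-- precise convergence to injections agrees on tags. -/
theorem tprec_injection_tags {M' M W' W : Tm} {i k : Bool} {T' T : TTy}
    (hprec : TPrec M' M) (hty' : Typed [] M' T') (hty : Typed [] M T)
    (h1 : Steps M' (.inj i W')) (hv1 : Value W')
    (h2 : Steps M (.inj k W)) (hv2 : Value W) :
    i = k ∧ TPrec W' W := by
  obtain ⟨N', hsN', hN'⟩ := sims h2 hprec hty' hty
  have htyN' : Typed [] N' T' := preservation_steps hsN' hty'
  obtain ⟨u, hsu, hu⟩ := catchup hN' (Value.inj k W hv2) htyN'
  have hMu : Steps M' u := hsN'.trans hsu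
  have hnorm : ∀ y, ¬ Step (Tm.inj i W') y :=
    fun y hy => value_not_step (Value.inj i W' hv1) hy
  have huW : Steps u (.inj i W') := steps_to_normal h1 hnorm hMu
  have hueq : u = .inj i W' := by
    cases (Relation.ReflTransGen.cases_head huW) with
    | inl h => exact h
    | inr h =>
      obtain ⟨d, hd, _⟩ := h
      exfalso
      cases hu with
      | inl hval => exact value_not_step hval.1 hd
      | inr he => subst he; exact mf_not_step hd
  subst hueq
  cases hu with
  | inr he => cases he
  | inl hval =>
    cases hval.2 with
    | inj hw => exact ⟨rfl, hw⟩
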